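/- Let v be a smooth vector field on a closed (compact, boundaryless) smooth manifold M generating a flow Φ (write x·t), let R be the chain recurrent set of Φ, and let L : M → ℝ be a smooth Lyapunov function for (Φ, R), i.e., the derivative of L along v is strictly negative at every point of M − R and the differential dL vanishes at every point of R. Let Z be a connected component of R which is isolated in R (there is a neighborhood U₀ of Z with U₀ ∩ R = Z), and suppose L is constant on Z with value c. Let W be an open neighborhood of Z whose closure satisfies closure(W) ∩ R = Z. Then there exists ε₀ > 0 such that for every 0 < ε ≤ ε₀, every point x ∈ M with L(x) = c + ε whose ω-limit set is contained in Z belongs to W. -/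

import Mathlib

open Set Filter
open scoped Manifold Topology

/-- A smooth vector field on `M`: a smooth section of the tangent bundle. -/
def IsSmoothVF {n : ℕ} {M : Type} [TopologicalSpace M]
    [ChartedSpace (EuclideanSpace ℝ (Fin n)) M]
    [IsManifold (𝓡 n) ((⊤ : ℕ∞) : WithTop ℕ∞) M]
    (v : (x : M) → TangentSpace (𝓡 n) x) : Prop :=
  ContMDiff (𝓡 n) (𝓡 n).tangent (⊤ : ℕ∞)
    (fun x => (⟨x, v x⟩ : TangentBundle (𝓡 n) M))

/-- `γ : ℝ → M` is an integral curve of the vector field `v`: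
`γ'(t) = v(γ(t))` for all `t`. -/
def IsIntCurve {n : ℕ} {M : Type} [TopologicalSpace M]
    [ChartedSpace (EuclideanSpace ℝ (Fin n)) M]
    [IsManifold (𝓡 n) ((⊤ : ℕ∞) : WithTop ℕ∞) M]
    (v : (x : M) → TangentSpace (𝓡 n) x) (γ : ℝ → M) : Prop :=
  ∀ t : ℝ, HasMFDerivAt 𝓘(ℝ, ℝ) (𝓡 n) γ t
    ((1 : ℝ →L[ℝ] ℝ).smulRight (v (γ t)))

/-- `Φ : M × ℝ → M` (curried) is the flow generated by the vector field `v`: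
it is continuous, starts at the identity, satisfies the group law, and each
trajectory `t ↦ Φ x t` is an integral curve of `v`. -/
def IsFlowOf {n : ℕ} {M : Type} [TopologicalSpace M]
    [ChartedSpace (EuclideanSpace ℝ (Fin n)) M]
    [IsManifold (𝓡 n) ((⊤ : ℕ∞) : WithTop ℕ∞) M]
    (v : (x : M) → TangentSpace (𝓡 n) x) (Φ : M → ℝ → M) : Prop :=
  Continuous (fun p : M × ℝ => Φ p.1 p.2) ∧ (∀ x : M, Φ x 0 = x) ∧
    (∀ (x : M) (s t : ℝ), Φ x (s + t) = Φ (Φ x s) t) ∧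
    ∀ x : M, IsIntCurve v (Φ x)

/-- The chain recurrent set of the flow `Φ` (with respect to the metric `d`):
points `x` such that for all `δ > 0` and `T > 1` there is a `(δ,T)`-chain
`x = x₀, x₁, …, x_N = x`, with times `tᵢ ≥ T` and
`d(x_{i-1}·t_i, x_i) < δ`. -/
def chainRecurrentSet {M : Type} [MetricSpace M] (Φ : M → ℝ → M) : Set M :=
  {x : M | ∀ δ > (0 : ℝ), ∀ T > (1 : ℝ),
    ∃ (N : ℕ) (xs : ℕ → M) (ts : ℕ → ℝ), 0 < N ∧ xs 0 = x ∧ xs N = x ∧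
      ∀ i < N, T ≤ ts i ∧ dist (Φ (xs i) (ts i)) (xs (i + 1)) < δ}

/-- The differential of a real-valued function, regarded at each point as a
linear functional on the tangent space (this is `mfderiv`, with its codomain
`TangentSpace 𝓘(ℝ,ℝ) (f p)` read as `ℝ`). -/
noncomputable def mdiffReal {n : ℕ} {M : Type} [TopologicalSpace M]
    [ChartedSpace (EuclideanSpace ℝ (Fin n)) M]
    [IsManifold (𝓡 n) ((⊤ : ℕ∞) : WithTop ℕ∞) M]
    (f : M → ℝ) (p : M) : TangentSpace (𝓡 n) p →L[ℝ] ℝ :=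
  mfderiv (𝓡 n) 𝓘(ℝ, ℝ) f p

section Aux
variable {n : ℕ} {M : Type} [MetricSpace M]
    [ChartedSpace (EuclideanSpace ℝ (Fin n)) M]
    [IsManifold (𝓡 n) ((⊤ : ℕ∞) : WithTop ℕ∞) M]
    {v : (x : M) → TangentSpace (𝓡 n) x}
    {Φ : M → ℝ → M}

lemma IsFlowOf.cont_traj (hΦ : IsFlowOf v Φ) (x : M) : Continuous (Φ x) :=
  hΦ.1.comp (Continuous.prodMk_right x)

lemma IsFlowOf.cont_time (hΦ : IsFlowOf v Φ) (s : ℝ) :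
    Continuous (fun y : M => Φ y s) :=
  hΦ.1.comp (continuous_id.prodMk continuous_const)

lemma hasDerivAt_L (hΦ : IsFlowOf v Φ) {L : M → ℝ}
    (hL : ContMDiff (𝓡 n) 𝓘(ℝ, ℝ) (⊤ : ℕ∞) L) (x : M) (t : ℝ) :
    HasDerivAt (fun s => L (Φ x s)) (mdiffReal (n := n) L (Φ x t) (v (Φ x t))) t := by
  have h1 := hΦ.2.2.2 x t
  have h2 : HasMFDerivAt (𝓡 n) 𝓘(ℝ, ℝ) L (Φ x t) (mdiffReal (n := n) L (Φ x t)) :=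
    (hL.mdifferentiableAt (by simp)).hasMFDerivAt
  have h3 := h2.comp t h1
  rw [hasMFDerivAt_iff_hasFDerivAt] at h3
  have h3' : HasFDerivAt (L ∘ Φ x) (((mdiffReal (n := n) L (Φ x t)).comp
      ((1 : ℝ →L[ℝ] ℝ).smulRight (v (Φ x t)))) : ℝ →L[ℝ] ℝ) t := h3
  have h4 := h3'.hasDerivAt
  have heq : ((mdiffReal (n := n) L (Φ x t)).comp
      ((1 : ℝ →L[ℝ] ℝ).smulRight (v (Φ x t)))) 1
      = mdiffReal (n := n) L (Φ x t) (v (Φ x t)) := by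
    rw [ContinuousLinearMap.comp_apply, ContinuousLinearMap.smulRight_apply,
      ContinuousLinearMap.one_apply, one_smul]
  rw [heq] at h4
  exact h4

lemma L_antitone (hΦ : IsFlowOf v Φ) {L : M → ℝ}
    (hL : ContMDiff (𝓡 n) 𝓘(ℝ, ℝ) (⊤ : ℕ∞) L)
    (hle : ∀ p : M, mdiffReal (n := n) L p (v p) ≤ 0) (x : M) :
    Antitone (fun s => L (Φ x s)) := by
  apply antitone_of_deriv_nonpos
  · exact fun t => (hasDerivAt_L hΦ hL x t).differentiableAt
  · intro t
    rw [(hasDerivAt_L hΦ hL x t).deriv]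
    exact hle _

lemma L_le_of_mem_closure {L : M → ℝ} (hLc : Continuous L) {x : M}
    (hanti : Antitone fun s => L (Φ x s)) {t : ℝ} {z : M}
    (hz : z ∈ closure (Φ x '' Set.Ici t)) : L z ≤ L (Φ x t) := by
  have hsub : closure (Φ x '' Set.Ici t) ⊆ {w : M | L w ≤ L (Φ x t)} := by
    apply closure_minimal _ (isClosed_le hLc continuous_const)
    rintro w ⟨s, hs, rfl⟩
    exact hanti hs
  exact hsub hz

lemma omega_directed (x : M) :
    Directed (fun x1 x2 : Set M => x1 ⊇ x2)
      (fun t : ℝ => closure (Φ x '' Set.Ici t)) := fun a b =>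
  ⟨max a b,
    closure_mono (image_mono (Ici_subset_Ici.2 (le_max_left a b))),
    closure_mono (image_mono (Ici_subset_Ici.2 (le_max_right a b)))⟩

lemma omega_nonempty [CompactSpace M] (x : M) :
    (⋂ t : ℝ, closure (Φ x '' Set.Ici t)).Nonempty :=
  IsCompact.nonempty_iInter_of_directed_nonempty_isCompact_isClosed _
    (omega_directed x)
    (fun t => ⟨Φ x t, subset_closure (mem_image_of_mem _ (mem_Ici.2 le_rfl))⟩)
    (fun _ => isClosed_closure.isCompact)
    (fun _ => isClosed_closure)

lemma eventually_mem [CompactSpace M] (hΦ : IsFlowOf v Φ) (x : M) {U : Set M}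
    (hU : IsOpen U) (hsub : (⋂ t : ℝ, closure (Φ x '' Set.Ici t)) ⊆ U) :
    ∃ T : ℝ, ∀ s ≥ T, Φ x s ∈ U := by
  by_contra h
  push_neg at h
  have hne : ∀ t : ℝ, (closure (Φ x '' Set.Ici t) ∩ Uᶜ).Nonempty := by
    intro t
    obtain ⟨s, hs, hsU⟩ := h t
    exact ⟨Φ x s, subset_closure (mem_image_of_mem _ hs), hsU⟩
  have hcl : ∀ t : ℝ, IsClosed (closure (Φ x '' Set.Ici t) ∩ Uᶜ) :=
    fun t => isClosed_closure.inter (isClosed_compl_iff.2 hU)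
  have hdir : Directed (fun x1 x2 : Set M => x1 ⊇ x2)
      (fun t : ℝ => closure (Φ x '' Set.Ici t) ∩ Uᶜ) := fun a b =>
    ⟨max a b,
      inter_subset_inter (closure_mono (image_mono (Ici_subset_Ici.2 (le_max_left a b)))) subset_rfl,
      inter_subset_inter (closure_mono (image_mono (Ici_subset_Ici.2 (le_max_right a b)))) subset_rfl⟩
  obtain ⟨w, hw⟩ := IsCompact.nonempty_iInter_of_directed_nonempty_isCompact_isClosed _
    hdir hne (fun t => (hcl t).isCompact) hcl
  rw [mem_iInter] at hw
  have hwU : w ∈ U := hsub (mem_iInter.2 fun t => (hw t).1)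
  exact (hw 0).2 hwU

lemma omega_subset_chain [CompactSpace M] (hΦ : IsFlowOf v Φ) (x : M) :
    (⋂ t : ℝ, closure (Φ x '' Set.Ici t)) ⊆ chainRecurrentSet Φ := by
  intro z hz δ hδ T hT
  have hT0 : (0 : ℝ) < T := lt_trans one_pos hT
  have huc := CompactSpace.uniformContinuous_of_continuous (hΦ.cont_time T)
  rw [Metric.uniformContinuous_iff] at huc
  obtain ⟨η, hη, hηd⟩ := huc δ hδ
  rw [mem_iInter] at hz
  obtain ⟨w0, hw0, hdw0⟩ := Metric.mem_closure_iff.1 (hz 0) η hη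
  obtain ⟨t0, ht0, rfl⟩ := hw0
  obtain ⟨w1, hw1, hdw1⟩ := Metric.mem_closure_iff.1 (hz (t0 + T + T)) δ hδ
  obtain ⟨t1, ht1, rfl⟩ := hw1
  rw [mem_Ici] at ht1
  refine ⟨2, fun i => if i = 0 then z else if i = 1 then Φ x (t0 + T) else z,
    fun i => if i = 0 then T else t1 - (t0 + T), by norm_num, by simp, by simp, ?_⟩
  intro i hi
  interval_cases i
  · norm_num
    rw [show Φ x (t0 + T) = Φ (Φ x t0) T from hΦ.2.2.1 x t0 T]
    exact hηd hdw0
  · norm_num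
    refine ⟨by linarith, ?_⟩
    rw [show Φ (Φ x (t0 + T)) (t1 - (t0 + T)) = Φ x t1 by
      rw [← hΦ.2.2.1 x (t0 + T) (t1 - (t0 + T))]; ring_nf, dist_comm]
    exact hdw1

end Aux

/-- **(Lemma `lmcon`.)**  Let `L` be a smooth Lyapunov function for the pair
`(Φ, R)`, where `R` is the chain recurrent set of the flow `Φ` of a smooth
vector field `v` on a closed manifold `M`, let `Z` be an isolated connected
component of `R` on which `L` is constant with value `c`, and let `W` be an
open neighbourhood of `Z` with `closure W ∩ R = Z`.  Then there is `ε₀ > 0`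
such that for all `0 < ε ≤ ε₀`, every `x` with `L x = c + ε` whose ω-limit
set is contained in `Z` lies in `W`. -/
theorem lyapunov_level_near_component
    (n : ℕ) (M : Type) [MetricSpace M]
    [ChartedSpace (EuclideanSpace ℝ (Fin n)) M]
    [IsManifold (𝓡 n) ((⊤ : ℕ∞) : WithTop ℕ∞) M]
    [CompactSpace M]
    (v : (x : M) → TangentSpace (𝓡 n) x) (hv : IsSmoothVF v)
    (Φ : M → ℝ → M) (hΦ : IsFlowOf v Φ)
    (L : M → ℝ) (hL : ContMDiff (𝓡 n) 𝓘(ℝ, ℝ) (⊤ : ℕ∞) L)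
    (hLyap : ∀ x : M, x ∉ chainRecurrentSet Φ → mdiffReal (n := n) L x (v x) < 0)
    (hdL : ∀ x ∈ chainRecurrentSet Φ, mdiffReal (n := n) L x = 0)
    (Z : Set M)
    (hZ : ∃ x ∈ chainRecurrentSet Φ, Z = connectedComponentIn (chainRecurrentSet Φ) x)
    (hiso : ∃ U₀ : Set M, IsOpen U₀ ∧ Z ⊆ U₀ ∧ U₀ ∩ chainRecurrentSet Φ = Z)
    (c : ℝ) (hc : ∀ z ∈ Z, L z = c)
    (W : Set M) (hWopen : IsOpen W) (hZW : Z ⊆ W)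
    (hWR : closure W ∩ chainRecurrentSet Φ = Z) :
    ∃ ε₀ : ℝ, 0 < ε₀ ∧ ∀ ε : ℝ, 0 < ε → ε ≤ ε₀ →
      ∀ x : M, L x = c + ε →
        (⋂ t : ℝ, closure (Φ x '' Set.Ici t)) ⊆ Z → x ∈ W := by
  classical
  have hle : ∀ p : M, mdiffReal (n := n) L p (v p) ≤ 0 := by
    intro p
    by_cases hp : p ∈ chainRecurrentSet Φ
    · rw [hdL p hp]; simp
    · exact (hLyap p hp).le
  have hanti : ∀ x : M, Antitone fun s => L (Φ x s) := fun x => L_antitone hΦ hL hle x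
  have hLc : Continuous L := hL.continuous
  by_contra hcon
  push_neg at hcon
  have H : ∀ k : ℕ, ∃ x : M, (∃ ε : ℝ, 0 < ε ∧ ε ≤ 1/(k+1 : ℝ) ∧ L x = c + ε) ∧
      (⋂ t : ℝ, closure (Φ x '' Set.Ici t)) ⊆ Z ∧ x ∉ W := by
    intro k
    obtain ⟨ε, hε1, hε2, x, hx1, hx2, hx3⟩ := hcon (1/(k+1 : ℝ)) (by positivity)
    exact ⟨x, ⟨ε, hε1, hε2, hx1⟩, hx2, hx3⟩
  choose xx hxxε hxxω hxxW using H
  have hSfacts : ∀ k : ℕ, ∃ τ : ℝ, 0 ≤ τ ∧ Φ (xx k) τ ∉ W ∧ ∀ s > τ, Φ (xx k) s ∈ W := by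
    intro k
    set S : Set ℝ := {t : ℝ | 0 ≤ t ∧ Φ (xx k) t ∈ Wᶜ} with hS
    have hSne : S.Nonempty := ⟨0, le_rfl, by rw [hΦ.2.1]; exact hxxW k⟩
    obtain ⟨T, hT⟩ := eventually_mem hΦ (xx k) hWopen ((hxxω k).trans hZW)
    have hSbdd : BddAbove S := ⟨T, fun t ht => le_of_not_gt fun h => ht.2 (hT t h.le)⟩
    have hScl : IsClosed S := by
      have : S = Set.Ici (0:ℝ) ∩ (Φ (xx k)) ⁻¹' Wᶜ := rfl
      rw [this]
      exact isClosed_Ici.inter ((isClosed_compl_iff.2 hWopen).preimage (hΦ.cont_traj (xx k)))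
    have hmem := hScl.csSup_mem hSne hSbdd
    refine ⟨sSup S, hmem.1, hmem.2, ?_⟩
    intro s hs
    by_contra hsW
    have hsS : s ∈ S := ⟨le_trans hmem.1 hs.le, hsW⟩
    exact absurd (le_csSup hSbdd hsS) (not_le.2 hs)
  choose τ hτ0 hτW hτafter using hSfacts
  set y : ℕ → M := fun k => Φ (xx k) (τ k) with hy
  have ycl : ∀ k, y k ∈ closure W := by
    intro k
    have htd : Filter.Tendsto (fun j : ℕ => Φ (xx k) (τ k + 1/(j+1 : ℝ))) atTop (𝓝 (y k)) := by
      apply ((hΦ.cont_traj (xx k)).tendsto (τ k)).comp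
      have h0 : Filter.Tendsto (fun _ : ℕ => τ k) atTop (𝓝 (τ k)) := tendsto_const_nhds
      have := h0.add tendsto_one_div_add_atTop_nhds_zero_nat
      simpa using this
    refine mem_closure_of_tendsto htd (Filter.Eventually.of_forall fun j => ?_)
    exact hτafter k _ (lt_add_of_pos_right _ (by positivity))
  have cLy : ∀ k, c ≤ L (y k) := by
    intro k
    obtain ⟨z, hz⟩ := omega_nonempty (Φ := Φ) (xx k)
    have hzZ : z ∈ Z := hxxω k hz
    have h1 := L_le_of_mem_closure hLc (hanti (xx k)) (mem_iInter.1 hz (τ k))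
    rw [hc z hzZ] at h1
    exact h1
  have Ly_le : ∀ k, L (y k) ≤ c + 1/(k+1 : ℝ) := by
    intro k
    obtain ⟨ε, hε1, hε2, hLxk⟩ := hxxε k
    have h1 := hanti (xx k) (hτ0 k)
    simp only at h1
    rw [hΦ.2.1, hLxk] at h1
    calc L (y k) ≤ c + ε := h1
      _ ≤ c + 1/(k+1 : ℝ) := by linarith
  obtain ⟨yinf, -, φ, hφmono, hφtend⟩ := isCompact_univ.tendsto_subseq (x := y)
    (fun k => Set.mem_univ _)
  have hyinfW : yinf ∉ W := by
    have := (isClosed_compl_iff.2 hWopen).mem_of_tendsto hφtend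
      (Filter.Eventually.of_forall fun j => hτW (φ j))
    exact this
  have hyinfcl : yinf ∈ closure W := isClosed_closure.mem_of_tendsto hφtend
    (Filter.Eventually.of_forall fun j => ycl (φ j))
  have hLyinf : L yinf = c := by
    have h1 : Filter.Tendsto (fun j => L (y (φ j))) atTop (𝓝 (L yinf)) :=
      (hLc.tendsto yinf).comp hφtend
    have h2 : Filter.Tendsto (fun j => L (y (φ j))) atTop (𝓝 c) := by
      apply tendsto_of_tendsto_of_tendsto_of_le_of_le (g := fun _ : ℕ => c)
        (h := fun j : ℕ => c + 1/(φ j + 1 : ℝ))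
      · exact tendsto_const_nhds
      · have hφat : Filter.Tendsto φ atTop atTop := hφmono.tendsto_atTop
        have h0 : Filter.Tendsto (fun _ : ℕ => c) atTop (𝓝 c) := tendsto_const_nhds
        have := h0.add (tendsto_one_div_add_atTop_nhds_zero_nat.comp hφat)
        simpa using this
      · exact fun j => cLy (φ j)
      · exact fun j => Ly_le (φ j)
    exact tendsto_nhds_unique h1 h2
  have htraj : ∀ s : ℝ, 0 ≤ s → Φ yinf s ∈ closure W := by
    intro s hs
    rcases eq_or_lt_of_le hs with heq | hlt
    · rw [← heq, hΦ.2.1]; exact hyinfcl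
    · have hmemW : ∀ j, Φ (y (φ j)) s ∈ W := by
        intro j
        have he : Φ (y (φ j)) s = Φ (xx (φ j)) (τ (φ j) + s) := (hΦ.2.2.1 _ _ _).symm
        rw [he]
        exact hτafter _ _ (lt_add_of_pos_right _ hlt)
      have htd : Filter.Tendsto (fun j => Φ (y (φ j)) s) atTop (𝓝 (Φ yinf s)) :=
        ((hΦ.cont_time s).tendsto yinf).comp hφtend
      exact isClosed_closure.mem_of_tendsto htd
        (Filter.Eventually.of_forall fun j => subset_closure (hmemW j))
  have homegaZ : (⋂ t : ℝ, closure (Φ yinf '' Set.Ici t)) ⊆ Z := by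
    intro w hw
    rw [← hWR]
    refine ⟨?_, omega_subset_chain hΦ yinf hw⟩
    have hw0 : w ∈ closure (Φ yinf '' Set.Ici (0:ℝ)) := mem_iInter.1 hw 0
    have hsub : Φ yinf '' Set.Ici (0:ℝ) ⊆ closure W := by
      rintro _ ⟨s, hs, rfl⟩; exact htraj s hs
    have := closure_mono hsub hw0
    rwa [closure_closure] at this
  have hconst : ∀ s : ℝ, 0 ≤ s → L (Φ yinf s) = c := by
    intro s hs
    have hub : L (Φ yinf s) ≤ c := by
      have h1 := hanti yinf hs
      simp only at h1
      rwa [hΦ.2.1, hLyinf] at h1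
    have hlb : c ≤ L (Φ yinf s) := by
      obtain ⟨z, hz⟩ := omega_nonempty (Φ := Φ) yinf
      have hzZ : z ∈ Z := homegaZ hz
      have h1 := L_le_of_mem_closure hLc (hanti yinf) (mem_iInter.1 hz s)
      rwa [hc z hzZ] at h1
    linarith
  have hyinfR : yinf ∉ chainRecurrentSet Φ := by
    intro hmem
    have : yinf ∈ Z := by rw [← hWR]; exact ⟨hyinfcl, hmem⟩
    exact hyinfW (hZW this)
  have hD : mdiffReal (n := n) L (Φ yinf 0) (v (Φ yinf 0)) < 0 := by
    rw [hΦ.2.1 yinf]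
    exact hLyap yinf hyinfR
  have hder := hasDerivAt_L hΦ hL yinf 0
  have hderW := hder.hasDerivWithinAt (s := Set.Ici (0:ℝ))
  have hconst' : HasDerivWithinAt (fun s => L (Φ yinf s)) 0 (Set.Ici (0:ℝ)) 0 := by
    apply (hasDerivWithinAt_const (0:ℝ) (Set.Ici (0:ℝ)) c).congr
    · intro s hs; exact hconst s hs
    · exact hconst 0 le_rfl
  have hzero : mdiffReal (n := n) L (Φ yinf 0) (v (Φ yinf 0)) = 0 := by
    have h1 := hderW.derivWithin (uniqueDiffOn_Ici (0:ℝ) 0 Set.self_mem_Ici)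
    have h2 := hconst'.derivWithin (uniqueDiffOn_Ici (0:ℝ) 0 Set.self_mem_Ici)
    exact h1.symm.trans h2
  exact absurd hD (by rw [hzero]; exact lt_irrefl 0)
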